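/- If the prediction strategy b̃_t(s) = (E_U[f(s·1·U)] − E_U[f(s·(−1)·U)])/2 is used, then for every prefix s of length t−1, the conditional expected final payoff plus the conditional expectation of f over random completions satisfies: E_U[payoff on s·b·U from time t onward] − E_U[f(s·b·U)] is the same for b = 1 and b = −1; consequently by backward induction the algorithm's payoff on any full sequence b is at least f(b) − E_S[f(S)]. -/

import Mathlib

/-- Map a Boolean bit to `±1`. -/
def pmOne (c : Bool) : ℝ := if c then 1 else -1

lemma pmOne_true : pmOne true = 1 := rfl
lemma pmOne_false : pmOne false = -1 := rfl

/-- Extend a prefix `p` of length `t` by one bit `c` and a suffix `u` to a full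
length-`T` sequence. -/
def extSeq (T t : ℕ) (ht : t < T) (p : Fin t → Bool) (c : Bool)
    (u : Fin (T - t - 1) → Bool) : Fin T → Bool := fun i =>
  if h : (i : ℕ) < t then p ⟨i, h⟩
  else if h2 : (i : ℕ) = t then c
  else u ⟨(i : ℕ) - t - 1, by have := i.isLt; omega⟩

/-- `E_U[f(p · c · U)]`: expectation of `f` over a uniformly random completion of the
prefix `p` followed by the bit `c`. -/
noncomputable def condE (T : ℕ) (f : (Fin T → Bool) → ℝ) (t : ℕ) (ht : t < T) (p : Fin t → Bool)
    (c : Bool) : ℝ :=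
  (∑ u : Fin (T - t - 1) → Bool, f (extSeq T t ht p c u)) / 2 ^ (T - t - 1)

/-- Cover's prediction strategy `b̃_t(p) = (E_U[f(p·1·U)] - E_U[f(p·(-1)·U)])/2`. -/
noncomputable def coverStrat (T : ℕ) (f : (Fin T → Bool) → ℝ) (t : Fin T)
    (p : Fin (t : ℕ) → Bool) : ℝ :=
  (condE T f t t.isLt p true - condE T f t t.isLt p false) / 2

/-- Payoff of the Cover strategy on a full sequence `b`. -/
noncomputable def coverPayoff (T : ℕ) (f : (Fin T → Bool) → ℝ) (b : Fin T → Bool) : ℝ :=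
  ∑ t : Fin T, pmOne (b t) * coverStrat T f t (fun s => b (Fin.castLE t.isLt.le s))

/-- `E_U[payoff from time t onward on p · c · U]` for the Cover strategy. -/
noncomputable def condFuturePayoff (T : ℕ) (f : (Fin T → Bool) → ℝ) (t : ℕ) (ht : t < T)
    (p : Fin t → Bool) (c : Bool) : ℝ :=
  (∑ u : Fin (T - t - 1) → Bool, ∑ r : Fin T,
      if t ≤ (r : ℕ) then
        pmOne (extSeq T t ht p c u r) *
          coverStrat T f r (fun s => extSeq T t ht p c u (Fin.castLE r.isLt.le s))
      else 0) / 2 ^ (T - t - 1)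

/-- Extend a prefix `p` of length `t` by a suffix `w` to a full length-`T` sequence. -/
def extFull (T t : ℕ) (ht : t ≤ T) (p : Fin t → Bool) (w : Fin (T - t) → Bool) :
    Fin T → Bool := fun i =>
  if h : (i : ℕ) < t then p ⟨i, h⟩
  else w ⟨(i : ℕ) - t, by have := i.isLt; omega⟩

/-- `E_W[f(p · W)]`. -/
noncomputable def fullE (T : ℕ) (f : (Fin T → Bool) → ℝ) (t : ℕ) (ht : t ≤ T)
    (p : Fin t → Bool) : ℝ :=
  (∑ w : Fin (T - t) → Bool, f (extFull T t ht p w)) / 2 ^ (T - t)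

lemma fullE_split (T : ℕ) (f : (Fin T → Bool) → ℝ) (t : ℕ) (ht : t < T) (p : Fin t → Bool) :
    fullE T f t ht.le p = (condE T f t ht p true + condE T f t ht p false) / 2 := by
  have key : (∑ w : Fin (T - t) → Bool, f (extFull T t ht.le p w))
      = ∑ cu : Bool × (Fin (T - t - 1) → Bool), f (extSeq T t ht p cu.1 cu.2) := by
    refine (Fintype.sum_bijective
      (fun cu : Bool × (Fin (T - t - 1) → Bool) =>
        (fun i : Fin (T - t) => if h : (i : ℕ) = 0 then cu.1
          else cu.2 ⟨(i : ℕ) - 1, by have := i.isLt; omega⟩))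
      ⟨?_, ?_⟩ _ _ ?_).symm
    · rintro ⟨c₁, u₁⟩ ⟨c₂, u₂⟩ h
      have h0 : (0 : ℕ) < T - t := by omega
      have hc := congrFun h ⟨0, h0⟩
      simp only [Fin.val_mk, dif_pos] at hc
      have hu : u₁ = u₂ := by
        funext j
        have hj := congrFun h ⟨(j : ℕ) + 1, by have := j.isLt; omega⟩
        simp only [Fin.val_mk, Nat.add_sub_cancel, Fin.eta] at hj
        rw [dif_neg (by omega), dif_neg (by omega)] at hj
        convert hj using 2 <;> exact (Fin.ext (by simp)).symm
      rw [hc, hu]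
    · intro w
      have h0 : (0 : ℕ) < T - t := by omega
      refine ⟨⟨w ⟨0, h0⟩, fun j => w ⟨(j : ℕ) + 1, by have := j.isLt; omega⟩⟩, ?_⟩
      funext i
      show (if h : (i : ℕ) = 0 then w ⟨0, h0⟩
          else w ⟨((i : ℕ) - 1) + 1, by have := i.isLt; omega⟩) = w i
      by_cases h : (i : ℕ) = 0
      · rw [dif_pos h]
        congr 1
        exact Fin.ext h.symm
      · rw [dif_neg h]
        congr 1
        exact Fin.ext (by simp only [Fin.val_mk]; omega)

    · rintro ⟨c, u⟩
      congr 1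
      funext i
      simp only [extSeq, extFull]
      by_cases h1 : (i : ℕ) < t
      · rw [dif_pos h1, dif_pos h1]
      · by_cases h2 : (i : ℕ) = t
        · rw [dif_neg h1, dif_neg h1, dif_pos h2,
            dif_pos (by simp only [Fin.val_mk]; omega :
              ((⟨(i : ℕ) - t, by have := i.isLt; omega⟩ : Fin (T - t)) : ℕ) = 0)]
        · rw [dif_neg h1, dif_neg h1, dif_neg h2,
            dif_neg (by simp only [Fin.val_mk]; omega :
              ¬ ((⟨(i : ℕ) - t, by have := i.isLt; omega⟩ : Fin (T - t)) : ℕ) = 0)]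
          try (congr 1; exact Fin.ext (by simp only [Fin.val_mk]))
  rw [fullE, key, Fintype.sum_prod_type, Fintype.sum_bool, condE, condE]
  have hpow : (2 : ℝ) ^ (T - t) = 2 ^ (T - t - 1) * 2 := by
    rw [← pow_succ]
    congr 1
    omega
  rw [hpow]
  field_simp

lemma fullE_next (T : ℕ) (f : (Fin T → Bool) → ℝ) (t : ℕ) (ht : t < T) (b : Fin T → Bool) :
    fullE T f (t + 1) ht (fun i => b (Fin.castLE ht i))
      = condE T f t ht (fun i => b (Fin.castLE ht.le i)) (b ⟨t, ht⟩) := by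
  have hty : T - (t + 1) = T - t - 1 := by omega
  rw [fullE, condE]
  congr 1
  apply Finset.sum_congr rfl
  intro w _
  congr 1
  funext i
  simp only [extFull, extSeq]
  by_cases h1 : (i : ℕ) < t
  · rw [dif_pos (by omega : (i : ℕ) < t + 1), dif_pos h1]
    rfl
  · by_cases h2 : (i : ℕ) = t
    · rw [dif_pos (by omega : (i : ℕ) < t + 1), dif_neg h1, dif_pos h2]
      congr 1
      exact Fin.ext (by simpa using h2)
    · rw [dif_neg (by omega : ¬ (i : ℕ) < t + 1), dif_neg h1, dif_neg h2]
      congr 1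

lemma cover_key (T : ℕ) (f : (Fin T → Bool) → ℝ) :
    ∀ (k t : ℕ) (ht : t ≤ T), t + k = T → ∀ b : Fin T → Bool,
      (∑ r : Fin T, if t ≤ (r : ℕ) then
          pmOne (b r) * coverStrat T f r (fun s => b (Fin.castLE r.isLt.le s)) else 0)
        = f b - fullE T f t ht (fun i => b (Fin.castLE ht i)) := by
  intro k
  induction k with
  | zero =>
    intro t ht hk b
    obtain rfl : T = t := by omega
    have h1 : (∑ r : Fin T, if T ≤ (r : ℕ) then
        pmOne (b r) * coverStrat T f r (fun s => b (Fin.castLE r.isLt.le s)) else 0) = 0 := by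
      apply Finset.sum_eq_zero
      intro r _
      rw [if_neg (by have := r.isLt; omega)]
    rw [h1]
    have h2 : fullE T f T ht (fun i => b (Fin.castLE ht i)) = f b := by
      rw [fullE]
      have hconst : ∀ w : Fin (T - T) → Bool,
          extFull T T ht (fun i => b (Fin.castLE ht i)) w = b := by
        intro w
        funext i
        rw [extFull, dif_pos i.isLt]
        congr 1
      rw [Finset.sum_congr rfl (fun w _ => congrArg f (hconst w)), Finset.sum_const]
      have hz : T - T = 0 := by omega
      rw [Finset.card_univ]
      simp [hz]
    rw [h2]
    ring
  | succ k ih =>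
    intro t ht hk b
    have htlt : t < T := by omega
    have ht1 : t + 1 ≤ T := htlt
    have hsplit : (∑ r : Fin T, if t ≤ (r : ℕ) then
        pmOne (b r) * coverStrat T f r (fun s => b (Fin.castLE r.isLt.le s)) else 0)
        = pmOne (b ⟨t, htlt⟩) *
            coverStrat T f ⟨t, htlt⟩ (fun s => b (Fin.castLE htlt.le s))
          + (∑ r : Fin T, if t + 1 ≤ (r : ℕ) then
              pmOne (b r) * coverStrat T f r (fun s => b (Fin.castLE r.isLt.le s)) else 0) := by
    -- pointwise decomposition of the indicator
      have hpt : ∀ r : Fin T, (if t ≤ (r : ℕ) then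
          pmOne (b r) * coverStrat T f r (fun s => b (Fin.castLE r.isLt.le s)) else 0)
          = (if r = ⟨t, htlt⟩ then
              pmOne (b r) * coverStrat T f r (fun s => b (Fin.castLE r.isLt.le s)) else 0)
            + (if t + 1 ≤ (r : ℕ) then
              pmOne (b r) * coverStrat T f r (fun s => b (Fin.castLE r.isLt.le s)) else 0) := by
        intro r
        by_cases h1 : (r : ℕ) = t
        · rw [if_pos (by omega : t ≤ (r : ℕ)), if_pos (Fin.ext h1 : r = ⟨t, htlt⟩),
            if_neg (by omega : ¬ t + 1 ≤ (r : ℕ))]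
          ring
        · by_cases h2 : t + 1 ≤ (r : ℕ)
          · rw [if_pos (by omega : t ≤ (r : ℕ)),
              if_neg (fun hr => h1 (by subst hr; rfl)), if_pos h2]
            ring
          · rw [if_neg (by omega : ¬ t ≤ (r : ℕ)),
              if_neg (fun hr => h1 (by subst hr; rfl)), if_neg h2]
            ring
      rw [Finset.sum_congr rfl (fun r _ => hpt r), Finset.sum_add_distrib,
        Finset.sum_ite_eq' Finset.univ (⟨t, htlt⟩ : Fin T), if_pos (Finset.mem_univ _)]
    rw [hsplit, ih (t + 1) ht1 (by omega) b]
    have hnext : fullE T f (t + 1) ht1 (fun i => b (Fin.castLE ht1 i))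
        = condE T f t htlt (fun i => b (Fin.castLE htlt.le i)) (b ⟨t, htlt⟩) :=
      fullE_next T f t htlt b
    have hA := fullE_split T f t htlt (fun i => b (Fin.castLE htlt.le i))
    rw [hnext, hA, coverStrat]
    cases hb : b ⟨t, htlt⟩ <;>
      first
        | (rw [pmOne_true]; ring)
        | (rw [pmOne_false]; ring)

theorem stmt_13 (T : ℕ) (hT : 0 < T) (f : (Fin T → Bool) → ℝ) :
    (∀ (t : ℕ) (ht : t < T) (p : Fin t → Bool),
        condFuturePayoff T f t ht p true - condE T f t ht p true =
          condFuturePayoff T f t ht p false - condE T f t ht p false) ∧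
    (∀ b : Fin T → Bool,
        f b - (∑ s : Fin T → Bool, f s) / 2 ^ T ≤ coverPayoff T f b) := by
  have main : ∀ (t : ℕ) (ht : t < T) (p : Fin t → Bool) (c : Bool),
      condFuturePayoff T f t ht p c = condE T f t ht p c - fullE T f t ht.le p := by
    intro t ht p c
    rw [condFuturePayoff, condE]
    have hinner : ∀ u : Fin (T - t - 1) → Bool,
        (∑ r : Fin T, if t ≤ (r : ℕ) then
            pmOne (extSeq T t ht p c u r) *
              coverStrat T f r (fun s => extSeq T t ht p c u (Fin.castLE r.isLt.le s))
          else 0)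
        = f (extSeq T t ht p c u) - fullE T f t ht.le p := by
      intro u
      rw [cover_key T f (T - t) t ht.le (by omega) (extSeq T t ht p c u)]
      have hpre : (fun i : Fin t => extSeq T t ht p c u (Fin.castLE ht.le i)) = p := by
        funext i
        rw [extSeq]
        rw [dif_pos (by simpa using i.isLt : ((Fin.castLE ht.le i : Fin T) : ℕ) < t)]
        congr 1
      rw [hpre]
    rw [Finset.sum_congr rfl (fun u _ => hinner u), Finset.sum_sub_distrib,
      Finset.sum_const]
    have hcard : (Finset.univ : Finset (Fin (T - t - 1) → Bool)).card = 2 ^ (T - t - 1) := by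
      simp [Finset.card_univ]
    rw [hcard]
    have hpow : (0 : ℝ) < 2 ^ (T - t - 1) := by positivity
    field_simp
    simp [nsmul_eq_mul]
  constructor
  · intro t ht p
    rw [main t ht p true, main t ht p false]
    ring
  · intro b
    have hk := cover_key T f T 0 (Nat.zero_le T) (by omega) b
    have hsum : (∑ r : Fin T, if 0 ≤ (r : ℕ) then
        pmOne (b r) * coverStrat T f r (fun s => b (Fin.castLE r.isLt.le s)) else 0)
        = coverPayoff T f b := by
      rw [coverPayoff]
      apply Finset.sum_congr rfl
      intro r _
      rw [if_pos (Nat.zero_le _)]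
    rw [hsum] at hk
    rw [hk]
    have hfe : fullE T f 0 (Nat.zero_le T) (fun i => b (Fin.castLE (Nat.zero_le T) i))
        = (∑ s : Fin T → Bool, f s) / 2 ^ T := by
      rw [fullE]
      have h2 : ∀ w : Fin (T - 0) → Bool,
          extFull T 0 (Nat.zero_le T) (fun i => b (Fin.castLE (Nat.zero_le T) i)) w
            = fun i : Fin T => w ⟨(i : ℕ), by have := i.isLt; omega⟩ := by
        intro w
        funext i
        rw [extFull, dif_neg (by omega)]
        congr 1
      rw [Finset.sum_congr rfl (fun w _ => congrArg f (h2 w))]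
      have h3 : (∑ w : Fin (T - 0) → Bool,
          f (fun i : Fin T => w ⟨(i : ℕ), by have := i.isLt; omega⟩))
          = ∑ s : Fin T → Bool, f s := by
        apply Fintype.sum_bijective (fun w : Fin (T - 0) → Bool =>
          (fun i : Fin T => w ⟨(i : ℕ), by have := i.isLt; omega⟩))
        · constructor
          · intro w₁ w₂ h
            funext j
            have hj := congrFun h ⟨(j : ℕ), by have := j.isLt; omega⟩
            simpa using hj
          · intro s
            refine ⟨fun j => s ⟨(j : ℕ), by have := j.isLt; omega⟩, ?_⟩
            funext i
            simp
        · intro w; rfl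
      rw [h3]
      norm_num
    rw [hfe]
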